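/- For every t >= 1, let G_t be the graph obtained from the complete bipartite graph K_{t,t} with sides S and S' by adding two new vertices a and b, where a is adjacent to all of S and b is adjacent to all of S'. Then G_t is vertex-coverable by two isometric trees (the stars centered at a and at b), and yet G_t has treewidth at least t. -/

import Mathlib

/-- A tree-decomposition of `G`. -/
def IsTreeDecomp {V : Type*} {ι : Type} (G : SimpleGraph V) (T : SimpleGraph ι)
    (bag : ι → Set V) : Prop :=
  T.IsTree ∧
  (∀ v : V, ∃ i, v ∈ bag i) ∧
  (∀ ⦃u v : V⦄, G.Adj u v → ∃ i, u ∈ bag i ∧ v ∈ bag i) ∧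
  (∀ v : V, (T.induce {i | v ∈ bag i}).Connected)

/-- The treewidth of `G`. -/
noncomputable def treewidth {V : Type*} (G : SimpleGraph V) : ℕ∞ :=
  sInf {w : ℕ∞ | ∃ (ι : Type) (T : SimpleGraph ι) (bag : ι → Set V),
    IsTreeDecomp G T bag ∧ ∀ i, (bag i).encard ≤ w + 1}

/-- The graph `G_t`: the complete bipartite graph `K_{t,t}` with sides
`S = inl (inl _)` and `S' = inl (inr _)`, together with two extra vertices
`a = inr true` adjacent to all of `S` and `b = inr false` adjacent to all of
`S'`. -/
def Gt (t : ℕ) : SimpleGraph ((Fin t ⊕ Fin t) ⊕ Bool) :=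
  SimpleGraph.fromRel (fun x y =>
    match x, y with
    | Sum.inl (Sum.inl _), Sum.inl (Sum.inr _) => True
    | Sum.inr true, Sum.inl (Sum.inl _) => True
    | Sum.inr false, Sum.inl (Sum.inr _) => True
    | _, _ => False)

open SimpleGraph Walk

section TreeLemmas
variable {ι : Type} {T : SimpleGraph ι}

noncomputable def tpath (hT : T.IsTree) (x y : ι) : T.Walk x y :=
  (hT.existsUnique_path x y).exists.choose

lemma tpath_isPath (hT : T.IsTree) (x y : ι) : (tpath hT x y).IsPath :=
  (hT.existsUnique_path x y).exists.choose_spec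

lemma tpath_unique (hT : T.IsTree) {x y : ι} (p : T.Walk x y) (hp : p.IsPath) :
    p = tpath hT x y := by
  obtain ⟨q, hq, hu⟩ := hT.existsUnique_path x y
  rw [hu p hp, hu (tpath hT x y) (tpath_isPath hT x y)]

lemma tpath_support_subset (hT : T.IsTree) {x y : ι} (p : T.Walk x y) :
    (tpath hT x y).support ⊆ p.support := by
  classical
  rw [← tpath_unique hT p.bypass p.bypass_isPath]
  exact p.support_bypass_subset

/-- every walk between x and y passes through every vertex of the tree path -/
lemma mem_walk_of_mem_tpath (hT : T.IsTree) {x y z : ι} (p : T.Walk x y)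
    (hz : z ∈ (tpath hT x y).support) : z ∈ p.support :=
  tpath_support_subset hT p hz

/-- a set whose induced subgraph is connected contains the tree-paths between its points -/
lemma tpath_subset_of_induce_connected (hT : T.IsTree) {S : Set ι}
    (hS : (T.induce S).Connected) {x y : ι} (hx : x ∈ S) (hy : y ∈ S) :
    ∀ z ∈ (tpath hT x y).support, z ∈ S := by
  obtain ⟨w⟩ := hS.preconnected ⟨x, hx⟩ ⟨y, hy⟩
  have hw := w.map (SimpleGraph.Embedding.induce S).toHom
  intro z hz
  have hz' : z ∈ (w.map (SimpleGraph.Embedding.induce S).toHom).support :=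
    tpath_support_subset hT _ hz
  rw [Walk.support_map] at hz'
  obtain ⟨⟨u, hu⟩, _, rfl⟩ := List.mem_map.mp hz'
  exact hu

/-- first vertex of S along a walk ending in S: there is a path from i ending at a
vertex g of S, meeting S only at g, with support inside the walk's support. -/
lemma exists_first_aux (S : Set ι) : ∀ {i j : ι} (W : T.Walk i j), j ∈ S →
    ∃ g ∈ S, ∃ W1 : T.Walk i g, (∀ z ∈ W1.support, z ∈ S → z = g) ∧
      ∀ z ∈ W1.support, z ∈ W.support := by
  intro i j W
  induction W with
  | nil => intro hj; exact ⟨_, hj, Walk.nil, by simp, by simp⟩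
  | @cons u v j h W ih =>
    intro hj
    by_cases hu : u ∈ S
    · exact ⟨u, hu, Walk.nil, by simp +contextual, by simp⟩
    · obtain ⟨g, hg, W1, h1, h2⟩ := ih hj
      refine ⟨g, hg, Walk.cons h W1, ?_, ?_⟩
      · intro z hz hzS
        rw [Walk.support_cons] at hz
        rcases List.mem_cons.mp hz with rfl | hz
        · exact absurd hzS hu
        · exact h1 z hz hzS
      · intro z hz
        rw [Walk.support_cons] at hz
        rcases List.mem_cons.mp hz with rfl | hz
        · simp
        · exact List.mem_cons_of_mem _ (h2 z hz)

lemma exists_first (hT : T.IsTree) (S : Set ι) {i j : ι} (W : T.Walk i j) (hj : j ∈ S) :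
    ∃ g ∈ S, ∃ W1 : T.Walk i g, W1.IsPath ∧ (∀ z ∈ W1.support, z ∈ S → z = g) ∧
      ∀ z ∈ W1.support, z ∈ W.support := by
  classical
  obtain ⟨g, hg, W1, h1, h2⟩ := exists_first_aux S W hj
  exact ⟨g, hg, W1.bypass, W1.bypass_isPath,
    fun z hz => h1 z (W1.support_bypass_subset hz),
    fun z hz => h2 z (W1.support_bypass_subset hz)⟩

lemma adj_of_support_subset_pair {g h : ι} (p : T.Walk g h) (hne : g ≠ h)
    (hsub : ∀ z ∈ p.support, z = g ∨ z = h) : T.Adj g h := by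
  cases p with
  | nil => exact absurd rfl hne
  | @cons _ x _ e p' =>
    have hx : x ∈ (Walk.cons e p').support := by
      rw [Walk.support_cons]; exact List.mem_cons_of_mem _ p'.start_mem_support
    rcases hsub x hx with rfl | rfl
    · exact absurd rfl e.ne
    · exact e

/-- GATE: for a connected (path-closed) nonempty set S and basepoint i, there is a gate
g ∈ S through which every tree path from i to a point of S passes. -/
lemma exists_gate (hT : T.IsTree) {S : Set ι}
    (hSc : ∀ x ∈ S, ∀ y ∈ S, ∀ z ∈ (tpath hT x y).support, z ∈ S)
    {j0 : ι} (hj0 : j0 ∈ S) (i : ι) :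
    ∃ g ∈ S, ∀ j ∈ S, g ∈ (tpath hT i j).support := by
  obtain ⟨g, hg, Pg, hPgpath, hPgS, _⟩ := exists_first hT S (tpath hT i j0) hj0
  refine ⟨g, hg, fun j hj => ?_⟩
  obtain ⟨h, hh, Ph, hPhpath, hPhS, hPhsub⟩ := exists_first hT S (tpath hT i j) hj
  -- it suffices to show g = h
  suffices hgh : g = h by
    subst hgh
    exact hPhsub g Ph.end_mem_support
  by_contra hne
  -- the tree path R from g to h lies in S
  set R := tpath hT g h with hR
  have hRS : ∀ z ∈ R.support, z ∈ S := hSc g hg h hh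
  -- R's support is inside supp Pg ∪ supp Ph
  have hRsub : ∀ z ∈ R.support, z ∈ Pg.support ∨ z ∈ Ph.support := by
    intro z hz
    have : z ∈ (Pg.reverse.append Ph).support := tpath_support_subset hT _ hz
    rw [Walk.mem_support_append_iff] at this
    rcases this with h1 | h1
    · left; rwa [Walk.support_reverse, List.mem_reverse] at h1
    · right; exact h1
  -- hence R's support is ⊆ {g, h}
  have hpair : ∀ z ∈ R.support, z = g ∨ z = h := by
    intro z hz
    rcases hRsub z hz with h1 | h1
    · exact Or.inl (hPgS z h1 (hRS z hz))
    · exact Or.inr (hPhS z h1 (hRS z hz))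
  have hadj : T.Adj g h := adj_of_support_subset_pair R hne hpair
  -- extend Pg by the edge g-h : a path from i to h, so it equals Ph
  have hnotmem : h ∉ Pg.support := fun hmem => hne ((hPgS h hmem hh).symm)
  have hconcat : (Pg.concat hadj).IsPath := by
    rw [Walk.isPath_def, Walk.support_concat]
    refine List.Nodup.append ((Walk.isPath_def _).mp hPgpath) (by simp) ?_
    intro a ha hb
    simp only [List.mem_singleton] at hb
    subst hb
    exact hnotmem ha
  have := tpath_unique hT (Pg.concat hadj) hconcat
  have heq : (Pg.concat hadj) = Ph := by rw [this, tpath_unique hT Ph hPhpath]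
  have hgmem : g ∈ Ph.support := by
    rw [← heq, Walk.support_concat]
    rw [List.mem_append]
    exact Or.inl Pg.end_mem_support
  exact hne (hPhS g hgmem hg)

variable {V : Type*}

/-- Helly property for subtrees of a tree. -/
lemma helly (hT : T.IsTree) (S : V → Set ι)
    (hSc : ∀ v, ∀ x ∈ S v, ∀ y ∈ S v, ∀ z ∈ (tpath hT x y).support, z ∈ S v)
    (F : Finset V) (hF : F.Nonempty)
    (hne : ∀ v ∈ F, (S v).Nonempty)
    (hmeet : ∀ u ∈ F, ∀ v ∈ F, (S u ∩ S v).Nonempty) :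
    ∃ i, ∀ v ∈ F, i ∈ S v := by
  classical
  revert hne hmeet
  induction hF using Finset.Nonempty.cons_induction with
  | singleton v =>
    intro hne hmeet
    obtain ⟨p, hp⟩ := hne v (by simp); exact ⟨p, by simpa using hp⟩
  | cons a F ha hF ih =>
    intro hne hmeet
    obtain ⟨p, hp⟩ := ih (fun v hv => hne v (Finset.mem_cons_of_mem hv))
      (fun u hu v hv => hmeet u (Finset.mem_cons_of_mem hu) v (Finset.mem_cons_of_mem hv))
    obtain ⟨q, hq⟩ := hne a (Finset.mem_cons_self a F)
    obtain ⟨g, hg, hgate⟩ := exists_gate hT (hSc a) hq p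
    refine ⟨g, fun v hv => ?_⟩
    rcases Finset.mem_cons.mp hv with rfl | hv
    · exact hg
    · obtain ⟨x, hx⟩ := hmeet v (Finset.mem_cons_of_mem hv) a (Finset.mem_cons_self a F)
      have hmem : g ∈ (tpath hT p x).support := hgate x hx.2
      exact hSc v p (hp v hv) x hx.1 g hmem

/-- Bridge: for disjoint path-closed nonempty sets S1 S2, there is g ∈ S2 on every
tree path from S1 to S2. -/
lemma exists_bridge (hT : T.IsTree) {S1 S2 : Set ι}
    (h1c : ∀ x ∈ S1, ∀ y ∈ S1, ∀ z ∈ (tpath hT x y).support, z ∈ S1)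
    (h2c : ∀ x ∈ S2, ∀ y ∈ S2, ∀ z ∈ (tpath hT x y).support, z ∈ S2)
    (hdisj : ∀ z, z ∈ S1 → z ∉ S2)
    {p1 : ι} (hp1 : p1 ∈ S1) {q : ι} (hq : q ∈ S2) :
    ∃ g ∈ S2, ∀ y ∈ S1, ∀ z ∈ S2, g ∈ (tpath hT y z).support := by
  obtain ⟨g, hg, hgate⟩ := exists_gate hT h2c hq p1
  refine ⟨g, hg, fun y hy z hz => ?_⟩
  -- the tree path from p1 to z passes through g
  have hmem : g ∈ (tpath hT p1 z).support := hgate z hz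
  -- and lies inside supp (tpath p1 y) ∪ supp (tpath y z)
  have hsub : g ∈ ((tpath hT p1 y).append (tpath hT y z)).support :=
    tpath_support_subset hT _ hmem
  rw [Walk.mem_support_append_iff] at hsub
  rcases hsub with h | h
  · exact absurd (h1c p1 hp1 y hy g h) (fun hgS1 => hdisj g hgS1 hg)
  · exact h

/-- The key combinatorial lemma: in a tree decomposition pattern where each S v is
path-closed and nonempty and S a meets S b for all a ∈ A, b ∈ B, some node lies in
all the subtrees of A plus one of B, or vice versa. -/
lemma key_lemma (hT : T.IsTree) (S : V → Set ι)
    (hSc : ∀ v, ∀ x ∈ S v, ∀ y ∈ S v, ∀ z ∈ (tpath hT x y).support, z ∈ S v)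
    (hne : ∀ v, (S v).Nonempty)
    (A B : Finset V) (hA : A.Nonempty) (hB : B.Nonempty)
    (hmeet : ∀ a ∈ A, ∀ b ∈ B, (S a ∩ S b).Nonempty) :
    (∃ i b, b ∈ B ∧ i ∈ S b ∧ ∀ a ∈ A, i ∈ S a) ∨
    (∃ i a, a ∈ A ∧ i ∈ S a ∧ ∀ b ∈ B, i ∈ S b) := by
  classical
  by_cases hcase : ∀ a1 ∈ A, ∀ a2 ∈ A, (S a1 ∩ S a2).Nonempty
  · -- Case 1: the A-subtrees pairwise meet; Helly gives a common point p
    left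
    obtain ⟨p, hp⟩ := helly hT S hSc A hA (fun v _ => hne v) hcase
    obtain ⟨b1, hb1⟩ := hB
    obtain ⟨a1, ha1⟩ := hA
    obtain ⟨x0, hx0⟩ := hmeet a1 ha1 b1 hb1
    obtain ⟨g, hg, hgate⟩ := exists_gate hT (hSc b1) hx0.2 p
    refine ⟨g, b1, hb1, hg, fun a haA => ?_⟩
    obtain ⟨x, hx⟩ := hmeet a haA b1 hb1
    exact hSc a p (hp a haA) x hx.1 g (hgate x hx.2)
  · -- Case 2: two disjoint A-subtrees; the bridge lies in every B-subtree
    right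
    push_neg at hcase
    obtain ⟨a1, ha1, a2, ha2, hdisj⟩ := hcase
    obtain ⟨p1, hp1⟩ := hne a1
    obtain ⟨q, hq⟩ := hne a2
    have hdisj' : ∀ z, z ∈ S a1 → z ∉ S a2 := by
      intro z h1 h2
      exact Set.notMem_empty z (hdisj ▸ Set.mem_inter h1 h2)
    obtain ⟨g, hg, hbridge⟩ := exists_bridge hT (hSc a1) (hSc a2) hdisj' hp1 hq
    refine ⟨g, a2, ha2, hg, fun b hbB => ?_⟩
    obtain ⟨y, hy⟩ := hmeet a1 ha1 b hbB
    obtain ⟨z, hz⟩ := hmeet a2 ha2 b hbB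
    have := hbridge y hy.1 z hz.1
    exact hSc b y hy.2 z hz.2 g this

end TreeLemmas

section Star
variable {W : Type*} {H : SimpleGraph W} {c : W}

lemma star_connected (h1 : ∀ x, x ≠ c → H.Adj c x) : H.Connected := by
  rw [connected_iff]
  refine ⟨fun x y => ?_, ⟨c⟩⟩
  have hx : H.Reachable c x := by
    by_cases h : x = c
    · subst h; rfl
    · exact (h1 x h).reachable
  have hy : H.Reachable c y := by
    by_cases h : y = c
    · subst h; rfl
    · exact (h1 y h).reachable
  exact hx.symm.trans hy

lemma star_no_reach (h2 : ∀ x y, H.Adj x y → x = c ∨ y = c) {b : W} (hbc : b ≠ c) :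
    ¬(H \ fromEdgeSet {s(c, b)}).Reachable b c := by
  classical
  intro hr
  obtain ⟨p⟩ := hr
  cases p with
  | nil => exact hbc rfl
  | cons h p =>
    rw [SimpleGraph.sdiff_adj, SimpleGraph.fromEdgeSet_adj] at h
    obtain ⟨h3, h4⟩ := h
    rcases h2 _ _ h3 with h5 | h5
    · exact hbc h5
    · subst h5
      exact h4 ⟨by rw [Sym2.eq_swap]; exact Set.mem_singleton _, hbc⟩

lemma star_isAcyclic (h2 : ∀ x y, H.Adj x y → x = c ∨ y = c) : H.IsAcyclic := by
  classical
  rw [isAcyclic_iff_forall_adj_isBridge]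
  intro v w hadj
  rw [isBridge_iff]
  rcases h2 v w hadj with rfl | rfl
  · exact fun hr => star_no_reach h2 hadj.ne' hr.symm
  · rw [Sym2.eq_swap]
    exact fun hr => star_no_reach h2 hadj.ne hr

lemma star_isTree (h1 : ∀ x, x ≠ c → H.Adj c x)
    (h2 : ∀ x y, H.Adj x y → x = c ∨ y = c) : H.IsTree :=
  ⟨star_connected h1, star_isAcyclic h2⟩

lemma dist_eq_two' {G : SimpleGraph W} {x y : W} (hne : x ≠ y) (hnadj : ¬G.Adj x y)
    (w : G.Walk x y) (hw : w.length = 2) : G.dist x y = 2 := by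
  have hle : G.dist x y ≤ 2 := hw ▸ SimpleGraph.dist_le w
  have h0 : G.dist x y ≠ 0 := by
    intro h
    rw [SimpleGraph.dist_eq_zero_iff_eq_or_not_reachable] at h
    rcases h with h | h
    · exact hne h
    · exact h ⟨w⟩
  have h1 : G.dist x y ≠ 1 := fun h => hnadj (SimpleGraph.dist_eq_one_iff_adj.mp h)
  omega

/-- distance between two distinct non-center vertices of a star is 2 -/
lemma star_dist_two (h1 : ∀ x, x ≠ c → H.Adj c x)
    (h2 : ∀ x y, H.Adj x y → x = c ∨ y = c) {x y : W}
    (hx : x ≠ c) (hy : y ≠ c) (hne : x ≠ y) : H.dist x y = 2 := by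
  have hnadj : ¬H.Adj x y := by
    intro h
    rcases h2 x y h with h | h
    · exact hx h
    · exact hy h
  exact dist_eq_two' hne hnadj (Walk.cons (h1 x hx).symm (Walk.cons (h1 y hy) Walk.nil)) rfl

end Star

lemma Gt_adj_ab (t : ℕ) (i j : Fin t) :
    (Gt t).Adj (Sum.inl (Sum.inl i)) (Sum.inl (Sum.inr j)) := by
  rw [Gt, SimpleGraph.fromRel_adj]
  exact ⟨by simp, Or.inl trivial⟩

lemma Gt_adj_a (t : ℕ) (i : Fin t) :
    (Gt t).Adj (Sum.inr true) (Sum.inl (Sum.inl i)) := by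
  rw [Gt, SimpleGraph.fromRel_adj]
  exact ⟨by simp, Or.inl trivial⟩

lemma Gt_adj_b (t : ℕ) (j : Fin t) :
    (Gt t).Adj (Sum.inr false) (Sum.inl (Sum.inr j)) := by
  rw [Gt, SimpleGraph.fromRel_adj]
  exact ⟨by simp, Or.inl trivial⟩

lemma Gt_not_adj_aa (t : ℕ) (i j : Fin t) :
    ¬ (Gt t).Adj (Sum.inl (Sum.inl i)) (Sum.inl (Sum.inl j)) := by
  rw [Gt, SimpleGraph.fromRel_adj]
  rintro ⟨-, h | h⟩ <;> exact h

lemma Gt_not_adj_bb (t : ℕ) (i j : Fin t) :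
    ¬ (Gt t).Adj (Sum.inl (Sum.inr i)) (Sum.inl (Sum.inr j)) := by
  rw [Gt, SimpleGraph.fromRel_adj]
  rintro ⟨-, h | h⟩ <;> exact h


def star1 (t : ℕ) : (Gt t).Subgraph where
  verts := {x | x = Sum.inr true ∨ ∃ i : Fin t, x = Sum.inl (Sum.inl i)}
  Adj u v := (u = Sum.inr true ∧ ∃ i : Fin t, v = Sum.inl (Sum.inl i)) ∨
    (v = Sum.inr true ∧ ∃ i : Fin t, u = Sum.inl (Sum.inl i))
  adj_sub := by
    rintro u v (⟨rfl, i, rfl⟩ | ⟨rfl, i, rfl⟩)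
    · exact Gt_adj_a t i
    · exact (Gt_adj_a t i).symm
  edge_vert := by
    rintro u v (⟨rfl, i, rfl⟩ | ⟨rfl, i, rfl⟩)
    · exact Or.inl rfl
    · exact Or.inr ⟨i, rfl⟩
  symm := by
    constructor
    rintro u v (⟨rfl, i, rfl⟩ | ⟨rfl, i, rfl⟩)
    · exact Or.inr ⟨rfl, i, rfl⟩
    · exact Or.inl ⟨rfl, i, rfl⟩

def star2 (t : ℕ) : (Gt t).Subgraph where
  verts := {x | x = Sum.inr false ∨ ∃ i : Fin t, x = Sum.inl (Sum.inr i)}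
  Adj u v := (u = Sum.inr false ∧ ∃ i : Fin t, v = Sum.inl (Sum.inr i)) ∨
    (v = Sum.inr false ∧ ∃ i : Fin t, u = Sum.inl (Sum.inr i))
  adj_sub := by
    rintro u v (⟨rfl, i, rfl⟩ | ⟨rfl, i, rfl⟩)
    · exact Gt_adj_b t i
    · exact (Gt_adj_b t i).symm
  edge_vert := by
    rintro u v (⟨rfl, i, rfl⟩ | ⟨rfl, i, rfl⟩)
    · exact Or.inl rfl
    · exact Or.inr ⟨i, rfl⟩
  symm := by
    constructor
    rintro u v (⟨rfl, i, rfl⟩ | ⟨rfl, i, rfl⟩)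
    · exact Or.inr ⟨rfl, i, rfl⟩
    · exact Or.inl ⟨rfl, i, rfl⟩

section Star1
variable (t : ℕ)

def c1 : (star1 t).verts := ⟨Sum.inr true, Or.inl rfl⟩

lemma star1_h1 : ∀ x : (star1 t).verts, x ≠ c1 t → (star1 t).coe.Adj (c1 t) x := by
  rintro ⟨x, hx | ⟨i, rfl⟩⟩ hne
  · exact absurd (Subtype.ext hx) hne
  · exact Or.inl ⟨rfl, i, rfl⟩

lemma star1_h2 : ∀ x y : (star1 t).verts, (star1 t).coe.Adj x y → x = c1 t ∨ y = c1 t := by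
  rintro ⟨x, hx⟩ ⟨y, hy⟩ (⟨h, -⟩ | ⟨h, -⟩)
  · exact Or.inl (Subtype.ext h)
  · exact Or.inr (Subtype.ext h)

lemma star1_isTree : (star1 t).coe.IsTree :=
  star_isTree (star1_h1 t) (star1_h2 t)

lemma star1_isometric : ∀ x y : (star1 t).verts,
    (star1 t).coe.dist x y = (Gt t).dist x y := by
  rintro ⟨x, hx⟩ ⟨y, hy⟩
  rcases hx with hx | ⟨i, rfl⟩ <;> rcases hy with hy | ⟨j, rfl⟩
  · -- both center
    subst hx; subst hy
    rw [SimpleGraph.dist_self, SimpleGraph.dist_self]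
  · -- x center, y leaf
    subst hx
    have hadj1 : (star1 t).coe.Adj ⟨Sum.inr true, Or.inl rfl⟩ ⟨Sum.inl (Sum.inl j), Or.inr ⟨j, rfl⟩⟩ :=
      Or.inl ⟨rfl, j, rfl⟩
    rw [SimpleGraph.dist_eq_one_iff_adj.mpr hadj1,
      SimpleGraph.dist_eq_one_iff_adj.mpr (Gt_adj_a t j)]
  · -- x leaf, y center
    subst hy
    have hadj1 : (star1 t).coe.Adj ⟨Sum.inl (Sum.inl i), Or.inr ⟨i, rfl⟩⟩ ⟨Sum.inr true, Or.inl rfl⟩ :=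
      Or.inr ⟨rfl, i, rfl⟩
    rw [SimpleGraph.dist_eq_one_iff_adj.mpr hadj1,
      SimpleGraph.dist_eq_one_iff_adj.mpr (Gt_adj_a t i).symm]
  · -- both leaves
    by_cases hij : i = j
    · subst hij
      rw [SimpleGraph.dist_self, SimpleGraph.dist_self]
    · have hne : (Sum.inl (Sum.inl i) : (Fin t ⊕ Fin t) ⊕ Bool) ≠ Sum.inl (Sum.inl j) := by
        simp [hij]
      have hneS : (⟨Sum.inl (Sum.inl i), Or.inr ⟨i, rfl⟩⟩ : (star1 t).verts) ≠
          ⟨Sum.inl (Sum.inl j), Or.inr ⟨j, rfl⟩⟩ := fun h => hne (congrArg Subtype.val h)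
      rw [star_dist_two (star1_h1 t) (star1_h2 t)
        (fun h => by simpa [c1] using congrArg Subtype.val h)
        (fun h => by simpa [c1] using congrArg Subtype.val h) hneS]
      rw [dist_eq_two' hne (Gt_not_adj_aa t i j)
        (Walk.cons (Gt_adj_a t i).symm (Walk.cons (Gt_adj_a t j) Walk.nil)) rfl]
end Star1

section Star2
variable (t : ℕ)

def c2 : (star2 t).verts := ⟨Sum.inr false, Or.inl rfl⟩

lemma star2_h1 : ∀ x : (star2 t).verts, x ≠ c2 t → (star2 t).coe.Adj (c2 t) x := by
  rintro ⟨x, hx | ⟨i, rfl⟩⟩ hne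
  · exact absurd (Subtype.ext hx) hne
  · exact Or.inl ⟨rfl, i, rfl⟩

lemma star2_h2 : ∀ x y : (star2 t).verts, (star2 t).coe.Adj x y → x = c2 t ∨ y = c2 t := by
  rintro ⟨x, hx⟩ ⟨y, hy⟩ (⟨h, -⟩ | ⟨h, -⟩)
  · exact Or.inl (Subtype.ext h)
  · exact Or.inr (Subtype.ext h)

lemma star2_isTree : (star2 t).coe.IsTree :=
  star_isTree (star2_h1 t) (star2_h2 t)

lemma star2_isometric : ∀ x y : (star2 t).verts,
    (star2 t).coe.dist x y = (Gt t).dist x y := by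
  rintro ⟨x, hx⟩ ⟨y, hy⟩
  rcases hx with hx | ⟨i, rfl⟩ <;> rcases hy with hy | ⟨j, rfl⟩
  · -- both center
    subst hx; subst hy
    rw [SimpleGraph.dist_self, SimpleGraph.dist_self]
  · -- x center, y leaf
    subst hx
    have hadj1 : (star2 t).coe.Adj ⟨Sum.inr false, Or.inl rfl⟩ ⟨Sum.inl (Sum.inr j), Or.inr ⟨j, rfl⟩⟩ :=
      Or.inl ⟨rfl, j, rfl⟩
    rw [SimpleGraph.dist_eq_one_iff_adj.mpr hadj1,
      SimpleGraph.dist_eq_one_iff_adj.mpr (Gt_adj_b t j)]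
  · -- x leaf, y center
    subst hy
    have hadj1 : (star2 t).coe.Adj ⟨Sum.inl (Sum.inr i), Or.inr ⟨i, rfl⟩⟩ ⟨Sum.inr false, Or.inl rfl⟩ :=
      Or.inr ⟨rfl, i, rfl⟩
    rw [SimpleGraph.dist_eq_one_iff_adj.mpr hadj1,
      SimpleGraph.dist_eq_one_iff_adj.mpr (Gt_adj_b t i).symm]
  · -- both leaves
    by_cases hij : i = j
    · subst hij
      rw [SimpleGraph.dist_self, SimpleGraph.dist_self]
    · have hne : (Sum.inl (Sum.inr i) : (Fin t ⊕ Fin t) ⊕ Bool) ≠ Sum.inl (Sum.inr j) := by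
        simp [hij]
      have hneS : (⟨Sum.inl (Sum.inr i), Or.inr ⟨i, rfl⟩⟩ : (star2 t).verts) ≠
          ⟨Sum.inl (Sum.inr j), Or.inr ⟨j, rfl⟩⟩ := fun h => hne (congrArg Subtype.val h)
      rw [star_dist_two (star2_h1 t) (star2_h2 t)
        (fun h => by simpa [c2] using congrArg Subtype.val h)
        (fun h => by simpa [c2] using congrArg Subtype.val h) hneS]
      rw [dist_eq_two' hne (Gt_not_adj_bb t i j)
        (Walk.cons (Gt_adj_b t i).symm (Walk.cons (Gt_adj_b t j) Walk.nil)) rfl]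
end Star2

open SimpleGraph in
lemma tw_lower (t : ℕ) (ht : 1 ≤ t) : (t : ℕ∞) ≤ treewidth (Gt t) := by
  classical
  apply le_sInf
  rintro w ⟨ι, T, bag, ⟨hT, hcov, hedge, hconnd⟩, hbd⟩
  set S : ((Fin t ⊕ Fin t) ⊕ Bool) → Set ι := fun v => {i | v ∈ bag i} with hS
  have hSc : ∀ v, ∀ x ∈ S v, ∀ y ∈ S v, ∀ z ∈ (tpath hT x y).support, z ∈ S v :=
    fun v x hx y hy => tpath_subset_of_induce_connected hT (hconnd v) hx hy
  have hne : ∀ v, (S v).Nonempty := fun v => hcov v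
  set A : Finset ((Fin t ⊕ Fin t) ⊕ Bool) :=
    Finset.univ.image (fun i : Fin t => Sum.inl (Sum.inl i)) with hA
  set B : Finset ((Fin t ⊕ Fin t) ⊕ Bool) :=
    Finset.univ.image (fun i : Fin t => Sum.inl (Sum.inr i)) with hB
  have hAne : A.Nonempty := by
    refine Finset.image_nonempty.mpr ?_
    exact Finset.univ_nonempty_iff.mpr ⟨⟨0, ht⟩⟩
  have hBne : B.Nonempty := by
    refine Finset.image_nonempty.mpr ?_
    exact Finset.univ_nonempty_iff.mpr ⟨⟨0, ht⟩⟩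
  have hAcard : A.card = t := by
    rw [hA, Finset.card_image_of_injective _ (by intro a b hab; simpa using hab)]
    simp
  have hBcard : B.card = t := by
    rw [hB, Finset.card_image_of_injective _ (by intro a b hab; simpa using hab)]
    simp
  have hmeet : ∀ a ∈ A, ∀ b ∈ B, (S a ∩ S b).Nonempty := by
    rintro a ha b hb
    rw [hA, Finset.mem_image] at ha
    rw [hB, Finset.mem_image] at hb
    obtain ⟨i, -, rfl⟩ := ha
    obtain ⟨j, -, rfl⟩ := hb
    obtain ⟨k, hk1, hk2⟩ := hedge (Gt_adj_ab t i j)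
    exact ⟨k, hk1, hk2⟩
  -- some bag contains t+1 vertices
  have hbig : ∃ i0 : ι, ∃ C : Finset ((Fin t ⊕ Fin t) ⊕ Bool),
      C.card = t + 1 ∧ ∀ v ∈ C, v ∈ bag i0 := by
    rcases key_lemma hT S hSc hne A B hAne hBne hmeet with ⟨i0, b, hbB, hib, hall⟩ |
      ⟨i0, a, haA, hia, hall⟩
    · refine ⟨i0, insert b A, ?_, ?_⟩
      · rw [Finset.card_insert_of_notMem, hAcard]
        intro hmem
        rw [hB, Finset.mem_image] at hbB
        rw [hA, Finset.mem_image] at hmem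
        obtain ⟨j, -, rfl⟩ := hbB
        obtain ⟨i, -, h⟩ := hmem
        simp at h
      · intro v hv
        rcases Finset.mem_insert.mp hv with rfl | hv
        · exact hib
        · exact hall v hv
    · refine ⟨i0, insert a B, ?_, ?_⟩
      · rw [Finset.card_insert_of_notMem, hBcard]
        intro hmem
        rw [hA, Finset.mem_image] at haA
        rw [hB, Finset.mem_image] at hmem
        obtain ⟨j, -, rfl⟩ := haA
        obtain ⟨i, -, h⟩ := hmem
        simp at h
      · intro v hv
        rcases Finset.mem_insert.mp hv with rfl | hv
        · exact hia
        · exact hall v hv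
  obtain ⟨i0, C, hCcard, hCsub⟩ := hbig
  have h1 : ((t : ℕ∞) + 1) ≤ (bag i0).encard := by
    have : (C : Set _).encard ≤ (bag i0).encard :=
      Set.encard_mono (fun v hv => hCsub v (by simpa using hv))
    rwa [Set.encard_coe_eq_coe_finsetCard, hCcard, Nat.cast_add, Nat.cast_one] at this
  have h2 : (t : ℕ∞) + 1 ≤ w + 1 := h1.trans (hbd i0)
  rcases eq_or_ne w ⊤ with rfl | hw
  · exact le_top
  · exact (ENat.add_le_add_iff_right (by simp)).mp h2

/-- For every `t ≥ 1`, the graph `G_t` is vertex-coverable by two isometric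
subtrees (the stars centered at `a` and `b`), yet has treewidth at least `t`. -/
theorem Gt_two_isometric_trees_large_treewidth (t : ℕ) (ht : 1 ≤ t) :
    (∃ T₁ T₂ : (Gt t).Subgraph,
      T₁.coe.IsTree ∧ T₂.coe.IsTree ∧
      (∀ x y : T₁.verts, T₁.coe.dist x y = (Gt t).dist x y) ∧
      (∀ x y : T₂.verts, T₂.coe.dist x y = (Gt t).dist x y) ∧
      T₁.verts ∪ T₂.verts = Set.univ) ∧
    (t : ℕ∞) ≤ treewidth (Gt t) := by
  refine ⟨⟨star1 t, star2 t, star1_isTree t, star2_isTree t, star1_isometric t,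
    star2_isometric t, ?_⟩, tw_lower t ht⟩
  ext x
  simp only [Set.mem_union, Set.mem_univ, iff_true]
  rcases x with (i | i) | b
  · exact Or.inl (Or.inr ⟨i, rfl⟩)
  · exact Or.inr (Or.inr ⟨i, rfl⟩)
  · cases b
    · exact Or.inr (Or.inl rfl)
    · exact Or.inl (Or.inl rfl)
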